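/- Let S = {a, b, c, d, e} ⊆ ℝ³ be an antipodal set such that the open segment (d, e) meets the interior of conv S. Then the plane through a parallel to the plane bcd supports conv S at a. -/
import Mathlib
set_option maxHeartbeats 1000000


def IsAntipodal {n : ℕ} (S : Set (Fin n → ℝ)) : Prop :=
  ∀ x ∈ S, ∀ y ∈ S, x ≠ y → ∃ f : (Fin n → ℝ) →ₗ[ℝ] ℝ, f ≠ 0 ∧
    ∀ z ∈ S, f x ≤ f z ∧ f z ≤ f y

/-- If `S = {a,b,c,d,e} ⊆ ℝ³` is an antipodal set of five points such that the open
segment `(d,e)` meets the interior of `conv S`, then the plane through `a` parallel to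
the plane `bcd` supports `conv S` at `a`. -/
theorem antipodal_five_support_plane (a b c d e : Fin 3 → ℝ)
    (hdist : List.Pairwise (· ≠ ·) [a, b, c, d, e])
    (hS : IsAntipodal ({a, b, c, d, e} : Set (Fin 3 → ℝ)))
    (hmeet : (openSegment ℝ d e ∩
      interior (convexHull ℝ ({a, b, c, d, e} : Set (Fin 3 → ℝ)))).Nonempty) :
    ∃ f : (Fin 3 → ℝ) →ₗ[ℝ] ℝ, f ≠ 0 ∧ f b = f c ∧ f c = f d ∧
      ∀ z ∈ convexHull ℝ ({a, b, c, d, e} : Set (Fin 3 → ℝ)), f z ≤ f a := by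
  classical
  obtain ⟨p, hpseg, hpint⟩ := hmeet
  set S : Set (Fin 3 → ℝ) := {a, b, c, d, e} with hSdef
  have haS : a ∈ S := by simp [hSdef]
  have hbS : b ∈ S := by simp [hSdef]
  have hcS : c ∈ S := by simp [hSdef]
  have hdS : d ∈ S := by simp [hSdef]
  have heS : e ∈ S := by simp [hSdef]
  have had : a ≠ d := (List.pairwise_cons.1 hdist).1 d (by simp)
  -- No nonzero functional is constant on S
  have hL1 : ∀ g : (Fin 3 → ℝ) →ₗ[ℝ] ℝ, g ≠ 0 → ¬ (∀ x ∈ S, ∀ y ∈ S, g x = g y) := by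
    intro g hg hconst
    obtain ⟨v, hv⟩ : ∃ v, g v ≠ 0 := by
      by_contra h
      push_neg at h
      exact hg (LinearMap.ext fun w => by simp [h w])
    have hsub : convexHull ℝ S ⊆ {z | g z = g a} :=
      convexHull_min (fun x hx => hconst x hx a haS) (convex_hyperplane g.isLinear _)
    obtain ⟨ε, hε, hball⟩ := Metric.mem_nhds_iff.1 (mem_interior_iff_mem_nhds.1 hpint)
    have hmem : ∀ {w : Fin 3 → ℝ}, w ∈ Metric.ball p ε → g w = g a := fun hw => hsub (hball hw)
    have h1 : g p = g a := hmem (Metric.mem_ball_self hε)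
    have h0 : (0:ℝ) ≤ ‖v‖ := norm_nonneg v
    have h2 : g (p + (ε / (‖v‖ + 1)) • v) = g a := by
      apply hmem
      simp only [Metric.mem_ball, dist_eq_norm, add_sub_cancel_left, norm_smul, Real.norm_eq_abs]
      rw [abs_of_pos (by positivity), div_mul_eq_mul_div, div_lt_iff₀ (by positivity)]
      nlinarith
    rw [map_add, map_smul, h1, smul_eq_mul] at h2
    have h3 : ε / (‖v‖ + 1) * g v = 0 := by linarith
    have h4 : ε / (‖v‖ + 1) ≠ 0 := by positivity
    rcases mul_eq_zero.1 h3 with h | h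
    exacts [absurd h h4, absurd h hv]
  -- strictness of antipodal bounds
  have hstrict : ∀ g : (Fin 3 → ℝ) →ₗ[ℝ] ℝ, g ≠ 0 → ∀ x₀ ∈ S, ∀ y₀ ∈ S,
      (∀ z ∈ S, g x₀ ≤ g z ∧ g z ≤ g y₀) → g x₀ < g y₀ := by
    intro g hg x₀ hx₀ y₀ hy₀ hb
    by_contra hle
    push_neg at hle
    refine hL1 g hg fun x hx y hy => ?_
    have h1 := hb x hx; have h2 := hb y hy
    exact le_antisymm (h1.2.trans (hle.trans h2.1)) (h2.2.trans (hle.trans h1.1))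
  -- a convex representation of a point near p with positive weight on a
  obtain ⟨t, t', ht, ht', htt, hpde⟩ := hpseg
  obtain ⟨ε, hε, hball⟩ := Metric.mem_nhds_iff.1 (mem_interior_iff_mem_nhds.1 hpint)
  set θ : ℝ := ε / (‖p - a‖ + 1) with hθdef
  have hθ : 0 < θ := by positivity
  set x : Fin 3 → ℝ := p + θ • (p - a) with hxdef
  have hxmem : x ∈ convexHull ℝ S := by
    apply hball
    have h0 : (0:ℝ) ≤ ‖p - a‖ := norm_nonneg _
    simp only [hxdef, Metric.mem_ball, dist_eq_norm, add_sub_cancel_left, norm_smul,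
      Real.norm_eq_abs, hθdef]
    rw [abs_of_pos (by positivity), div_mul_eq_mul_div, div_lt_iff₀ (by positivity)]
    nlinarith
  rw [hSdef] at hxmem
  obtain ⟨y1, hy1, hseg1⟩ : ∃ y ∈ convexHull ℝ ({b, c, d, e} : Set (Fin 3 → ℝ)),
      x ∈ segment ℝ a y := by
    rw [convexHull_insert ⟨b, by simp⟩, mem_convexJoin] at hxmem
    obtain ⟨x', hx', y, hy, hseg⟩ := hxmem
    rw [Set.mem_singleton_iff] at hx'
    exact ⟨y, hy, hx' ▸ hseg⟩
  obtain ⟨y2, hy2, hseg2⟩ : ∃ y ∈ convexHull ℝ ({c, d, e} : Set (Fin 3 → ℝ)),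
      y1 ∈ segment ℝ b y := by
    rw [convexHull_insert ⟨c, by simp⟩, mem_convexJoin] at hy1
    obtain ⟨x', hx', y, hy, hseg⟩ := hy1
    rw [Set.mem_singleton_iff] at hx'
    exact ⟨y, hy, hx' ▸ hseg⟩
  obtain ⟨y3, hy3, hseg3⟩ : ∃ y ∈ convexHull ℝ ({d, e} : Set (Fin 3 → ℝ)),
      y2 ∈ segment ℝ c y := by
    rw [convexHull_insert ⟨d, by simp⟩, mem_convexJoin] at hy2
    obtain ⟨x', hx', y, hy, hseg⟩ := hy2
    rw [Set.mem_singleton_iff] at hx'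
    exact ⟨y, hy, hx' ▸ hseg⟩
  obtain ⟨y4, hy4, hseg4⟩ : ∃ y ∈ convexHull ℝ ({e} : Set (Fin 3 → ℝ)),
      y3 ∈ segment ℝ d y := by
    rw [convexHull_insert ⟨e, by simp⟩, mem_convexJoin] at hy3
    obtain ⟨x', hx', y, hy, hseg⟩ := hy3
    rw [Set.mem_singleton_iff] at hx'
    exact ⟨y, hy, hx' ▸ hseg⟩
  rw [convexHull_singleton, Set.mem_singleton_iff] at hy4
  rw [hy4] at hseg4
  obtain ⟨q1, r1, hq1, hr1, hqr1, hE1⟩ := hseg1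
  obtain ⟨q2, r2, hq2, hr2, hqr2, hE2⟩ := hseg2
  obtain ⟨q3, r3, hq3, hr3, hqr3, hE3⟩ := hseg3
  obtain ⟨q4, r4, hq4, hr4, hqr4, hE4⟩ := hseg4
  -- the affine relation
  set μa : ℝ := θ + q1 with hμadef
  set μb : ℝ := r1 * q2 with hμbdef
  set μc : ℝ := r1 * r2 * q3 with hμcdef
  set μd : ℝ := (1 + θ) * t - r1 * r2 * r3 * q4 with hμddef
  set μe : ℝ := (1 + θ) * t' - r1 * r2 * r3 * r4 with hμedef
  have hμa : 0 < μa := by rw [hμadef]; positivity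
  have hμb : 0 ≤ μb := mul_nonneg hr1 hq2
  have hμc : 0 ≤ μc := mul_nonneg (mul_nonneg hr1 hr2) hq3
  have hsum : μa + μb + μc = μd + μe := by
    rw [hμadef, hμbdef, hμcdef, hμddef, hμedef]
    linear_combination hqr1 + r1 * hqr2 + r1 * r2 * hqr3 + r1 * r2 * r3 * hqr4 - (1 + θ) * htt
  have hmaster : μa • a + μb • b + μc • c = μd • d + μe • e := by
    funext i
    have E0 : t * d i + t' * e i = p i := by simpa using congrFun hpde i
    have EX : x i = p i + θ * (p i - a i) := by simp [hxdef]
    have E1 : q1 * a i + r1 * y1 i = x i := by simpa using congrFun hE1 i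
    have E2 : q2 * b i + r2 * y2 i = y1 i := by simpa using congrFun hE2 i
    have E3 : q3 * c i + r3 * y3 i = y2 i := by simpa using congrFun hE3 i
    have E4 : q4 * d i + r4 * e i = y3 i := by simpa using congrFun hE4 i
    simp only [Pi.add_apply, Pi.smul_apply, smul_eq_mul, hμadef, hμbdef, hμcdef, hμddef, hμedef]
    linear_combination (-(1 + θ)) * E0 + EX + E1 + r1 * E2 + r1 * r2 * E3 + r1 * r2 * r3 * E4
  have hrel : ∀ g : (Fin 3 → ℝ) →ₗ[ℝ] ℝ,
      μa * g a + μb * g b + μc * g c = μd * g d + μe * g e := by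
    intro g
    have h := congrArg g hmaster
    simpa [map_add, map_smul, smul_eq_mul] using h
  clear_value θ x μa μb μc μd μe
  -- μe > 0
  have hμe : 0 < μe := by
    by_contra hle
    push_neg at hle
    obtain ⟨g, hgne, hg⟩ := hS a haS d hdS had
    have hlt : g a < g d := hstrict g hgne a haS d hdS hg
    have key : μa * (g d - g a) + μb * (g d - g b) + μc * (g d - g c)
        + (-μe) * (g d - g e) = 0 := by
      linear_combination g d * hsum - hrel g
    nlinarith [mul_pos hμa (sub_pos.2 hlt), mul_nonneg hμb (sub_nonneg.2 (hg b hbS).2),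
      mul_nonneg hμc (sub_nonneg.2 (hg c hcS).2),
      mul_nonneg (neg_nonneg.2 hle) (sub_nonneg.2 (hg e heS).2)]
  -- μa ≤ μe
  have hμae : μa ≤ μe := by
    by_contra hlt'
    push_neg at hlt'
    obtain ⟨g, hgne, hg⟩ := hS d hdS a haS (Ne.symm had)
    have hlt : g d < g a := hstrict g hgne d hdS a haS hg
    have key : μb * (g b - g d) + μc * (g c - g d) + μe * (g a - g e)
        + (μa - μe) * (g a - g d) = 0 := by
      linear_combination hrel g - g d * hsum
    nlinarith [mul_nonneg hμb (sub_nonneg.2 (hg b hbS).1),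
      mul_nonneg hμc (sub_nonneg.2 (hg c hcS).1),
      mul_nonneg hμe.le (sub_nonneg.2 (hg e heS).2),
      mul_pos (sub_pos.2 hlt') (sub_pos.2 hlt)]
  -- construct the supporting functional
  set V : Submodule ℝ (Fin 3 → ℝ) := Submodule.span ℝ {c - b, d - b} with hVdef
  have hcbV : c - b ∈ V := Submodule.subset_span (by simp)
  have hdbV : d - b ∈ V := Submodule.subset_span (by simp)
  clear_value V
  by_cases habV : a - b ∈ V
  · exfalso
    have hμene : μe ≠ 0 := ne_of_gt hμe
    have h5 : μe • (e - b) = μa • (a - b) + μc • (c - b) - μd • (d - b) := by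
      funext i
      have hm := congrFun hmaster i
      simp only [Pi.add_apply, Pi.smul_apply, smul_eq_mul] at hm
      simp only [Pi.sub_apply, Pi.add_apply, Pi.smul_apply, smul_eq_mul]
      linear_combination b i * hsum - hm
    have hebV : e - b ∈ V := by
      have h6 : e - b = μe⁻¹ • (μe • (e - b)) := by
        rw [smul_smul, inv_mul_cancel₀ hμene, one_smul]
      rw [h6, h5]
      exact Submodule.smul_mem _ _ (Submodule.sub_mem _
        (Submodule.add_mem _ (Submodule.smul_mem _ _ habV) (Submodule.smul_mem _ _ hcbV))
        (Submodule.smul_mem _ _ hdbV))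
    have hVlt : V < ⊤ := by
      rw [hVdef]
      apply span_lt_top_of_card_lt_finrank
      have h2 : ({c - b, d - b} : Set (Fin 3 → ℝ)).toFinset.card ≤ 2 := by
        rw [Set.toFinset_insert, Set.toFinset_singleton]
        exact (Finset.card_insert_le _ _).trans (by simp)
      have h3 : Module.finrank ℝ (Fin 3 → ℝ) = 3 := by simp
      omega
    obtain ⟨f, hfne, hfmap⟩ := Submodule.exists_dual_map_eq_bot_of_lt_top hVlt inferInstance
    have hker : ∀ w ∈ V, f w = 0 := by
      intro w hw
      have h7 : f w ∈ V.map f := Submodule.mem_map_of_mem hw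
      rw [hfmap] at h7
      simpa using h7
    have hfb : ∀ z ∈ S, f z = f b := by
      intro z hz
      have h8 : ∀ w : Fin 3 → ℝ, w - b ∈ V → f w = f b := by
        intro w hw
        have h9 := hker _ hw
        rw [map_sub] at h9
        linarith
      rw [hSdef] at hz
      simp only [Set.mem_insert_iff, Set.mem_singleton_iff] at hz
      rcases hz with h | h | h | h | h
      · rw [h]; exact h8 a habV
      · rw [h]
      · rw [h]; exact h8 c hcbV
      · rw [h]; exact h8 d hdbV
      · rw [h]; exact h8 e hebV
    exact hL1 f hfne fun x hx y hy => by rw [hfb x hx, hfb y hy]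
  · obtain ⟨f, hfa, hfmap⟩ := V.exists_dual_map_eq_bot_of_notMem habV inferInstance
    have hker : ∀ w ∈ V, f w = 0 := by
      intro w hw
      have h7 : f w ∈ V.map f := Submodule.mem_map_of_mem hw
      rw [hfmap] at h7
      simpa using h7
    rw [map_sub] at hfa
    have hfcb : f c = f b := by have h9 := hker _ hcbV; rw [map_sub] at h9; linarith
    have hfdb : f d = f b := by have h9 := hker _ hdbV; rw [map_sub] at h9; linarith
    set k : ℝ := f a - f b with hkdef
    set f' : (Fin 3 → ℝ) →ₗ[ℝ] ℝ := k⁻¹ • f with hfdef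
    have hf'ab : f' a - f' b = 1 := by
      rw [hfdef]
      simp only [LinearMap.smul_apply, smul_eq_mul]
      rw [← mul_sub, ← hkdef, inv_mul_cancel₀ hfa]
    have hf'cb : f' c = f' b := by
      rw [hfdef]; simp only [LinearMap.smul_apply, smul_eq_mul, hfcb]
    have hf'db : f' d = f' b := by
      rw [hfdef]; simp only [LinearMap.smul_apply, smul_eq_mul, hfdb]
    clear_value k f'
    have hf'e : f' e ≤ f' a := by
      have h10 := hrel f'
      rw [hf'cb, hf'db] at h10
      have h11 : μe * (f' a - f' e) = (μe - μa) * (f' a - f' b) := by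
        linear_combination h10 - f' b * hsum
      rw [hf'ab, mul_one] at h11
      nlinarith [h11, hμe, hμae]
    refine ⟨f', ?_, ?_, ?_, ?_⟩
    · intro h0
      rw [h0] at hf'ab
      simp at hf'ab
    · rw [hf'cb]
    · rw [hf'cb, hf'db]
    · intro z hz
      have hsub : convexHull ℝ S ⊆ {w | f' w ≤ f' a} := by
        apply convexHull_min _ (convex_halfSpace_le f'.isLinear _)
        intro w hw
        rw [hSdef] at hw
        simp only [Set.mem_insert_iff, Set.mem_singleton_iff] at hw
        show f' w ≤ f' a
        rcases hw with h | h | h | h | h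
        · rw [h]
        · rw [h]; linarith
        · rw [h, hf'cb]; linarith
        · rw [h, hf'db]; linarith
        · rw [h]; exact hf'e
      exact hsub hz
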